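/- Let x_1, …, x_n be i.i.d. with a density bounded above by u whose support J_0 ⊆ [L_min, L_max] is a union of at most M intervals, L = L_max − L_min, and let c_0 > 0 and ε > 0. Let 𝒱 be the collection of all subsets of ℝ that are unions of at most M intervals each of length at most 2c_0. Then Prob( sup_{V ∈ 𝒱} (1/n)·R_n(V) − 3M·u·2c_0 > ε ) ≤ (L/(2c_0) + M)·exp(−2nε²/(9M²)), where R_n(V) = #{i ≤ n : x_i ∈ V}. -/

import Mathlib

open MeasureTheory ProbabilityTheory Filter Set
open scoped Classical

lemma two_mul_sub_one_le_log {x : ℝ} (hx : 1 ≤ x) :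
    2 * (x - 1) ≤ (x + 1) * Real.log x := by
  set f : ℝ → ℝ := fun y => (y + 1) * Real.log y - 2 * (y - 1) with hf
  have hder : ∀ y : ℝ, 0 < y →
      HasDerivAt f (Real.log y + (y + 1) * y⁻¹ - 2) y := by
    intro y hy
    have h1 : HasDerivAt (fun y : ℝ => (y + 1) * Real.log y)
        (1 * Real.log y + (y + 1) * y⁻¹) y :=
      ((hasDerivAt_id y).add_const 1).mul (Real.hasDerivAt_log hy.ne')
    have h2 : HasDerivAt (fun y : ℝ => 2 * (y - 1)) 2 y := by
      simpa using ((hasDerivAt_id y).sub_const 1).const_mul 2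
    have h3 := h1.sub h2
    rw [one_mul] at h3
    exact h3
  have hmono : MonotoneOn f (Set.Ici 1) := by
    apply monotoneOn_of_deriv_nonneg (convex_Ici 1)
    · apply ContinuousOn.sub
      · apply ContinuousOn.mul (Continuous.continuousOn (by continuity))
        exact Real.continuousOn_log.mono (by
          intro y hy
          simp only [Set.mem_Ici] at hy
          simp only [Set.mem_compl_iff, Set.mem_singleton_iff]
          intro h; rw [h] at hy; linarith)
      · exact (Continuous.continuousOn (by continuity))
    · intro y hy
      rw [interior_Ici] at hy
      exact ((hder y (by simp only [Set.mem_Ioi] at hy; linarith)).differentiableAt).differentiableWithinAt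
    · intro y hy
      rw [interior_Ici] at hy
      simp only [Set.mem_Ioi] at hy
      have hy0 : (0:ℝ) < y := by linarith
      rw [(hder y hy0).deriv]
      have hlog : 1 - y⁻¹ ≤ Real.log y := by
        have h := Real.log_le_sub_one_of_pos (inv_pos.2 hy0)
        rw [Real.log_inv] at h
        linarith
      have h2 : (y + 1) * y⁻¹ = 1 + y⁻¹ := by field_simp
      rw [h2]
      linarith
  have h1 : f 1 ≤ f x := hmono (by simp) (by simpa using hx) hx
  simp only [hf, Real.log_one, mul_zero, sub_self, mul_one, sub_zero, zero_sub] at h1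
  linarith

lemma exponent_ineq {q s : ℝ} (hq : 0 < q) (hs : 0 < s) (hle : 3/2 * q + s ≤ 1) :
    8/9 * s^2 ≤ (3/2*q+s) * Real.log ((3/2*q+s)/q) - ((3/2*q+s) - q) := by
  set a : ℝ := 3/2*q+s with ha
  clear_value a
  have haq : q < a := by simp only [ha]; linarith
  have ha0 : 0 < a := lt_trans hq haq
  have hx1 : 1 ≤ a / q := (le_div_iff₀ hq).2 (by linarith)
  have hlog := two_mul_sub_one_le_log hx1
  have h1 : 2 * (a - q) ≤ (a + q) * Real.log (a / q) := by
    have h := mul_le_mul_of_nonneg_left hlog hq.le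
    calc 2 * (a - q) = q * (2 * (a/q - 1)) := by field_simp
    _ ≤ q * ((a/q + 1) * Real.log (a/q)) := h
    _ = (a + q) * Real.log (a/q) := by field_simp
  have hpos : 0 < a + q := by linarith
  have h2 : 2 * (a - q) / (a + q) ≤ Real.log (a / q) := by
    rw [div_le_iff₀ hpos] at *
    linarith [h1]
  have h3 : a * (2 * (a - q) / (a + q)) ≤ a * Real.log (a / q) :=
    mul_le_mul_of_nonneg_left h2 ha0.le
  have hkey : 8/9 * s^2 + (a - q) ≤ a * (2 * (a - q) / (a + q)) := by
    rw [mul_div_assoc', le_div_iff₀ hpos]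
    have hs1 : s ≤ 1 := by linarith
    have e1 : 0 ≤ s^2 * (1 - s) := mul_nonneg (sq_nonneg s) (by linarith)
    have e2 : 0 ≤ q * s * (1 - s) := mul_nonneg (mul_nonneg hq.le hs.le) (by linarith)
    nlinarith [e1, e2, sq_nonneg q, sq_nonneg s, mul_pos hq hs]
  linarith


lemma chernoff_count {Ω : Type*} [MeasurableSpace Ω] (P : Measure Ω) [IsProbabilityMeasure P]
    (n : ℕ) (X : ℕ → Ω → ℝ) (hX : ∀ i, Measurable (X i))
    (hindep : iIndepFun X P)
    (s : Set ℝ) (hs : MeasurableSet s)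
    (q a : ℝ) (hq : 0 < q) (ha : q < a)
    (hp : ∀ i, (P (X i ⁻¹' s)).toReal ≤ q) :
    (P {ω | (n : ℝ) * a ≤ (((Finset.range n).filter fun i => X i ω ∈ s).card : ℝ)}).toReal
      ≤ Real.exp (-(n : ℝ) * (a * Real.log (a / q) - (a - q))) := by
  set t : ℝ := Real.log (a / q) with htdef
  have hx1 : (1:ℝ) ≤ a / q := (le_div_iff₀ hq).2 (by linarith)
  have ht : 0 ≤ t := Real.log_nonneg hx1
  have het : Real.exp t = a / q := Real.exp_log (by positivity)
  set Y : ℕ → Ω → ℝ := fun i ω => if X i ω ∈ s then 1 else 0 with hYdef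
  have hYmeas : ∀ i, Measurable (Y i) :=
    fun i => Measurable.ite ((hX i) hs) measurable_const measurable_const
  have hYindep : iIndepFun Y P := by
    have := hindep.comp (fun _ (x : ℝ) => if x ∈ s then (1:ℝ) else 0)
      (fun _ => Measurable.ite hs measurable_const measurable_const)
    exact this
  have hYrepr : ∀ i, (fun ω => Real.exp (t * Y i ω))
      = fun ω => Set.indicator (X i ⁻¹' s) (fun _ => Real.exp t - 1) ω + 1 := by
    intro i
    funext ω
    by_cases h : X i ω ∈ s <;> simp [hYdef, h, Set.indicator_of_mem, Set.indicator_of_notMem,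
      Set.mem_preimage]
  have hYint : ∀ i, Integrable (fun ω => Real.exp (t * Y i ω)) P := by
    intro i
    rw [hYrepr i]
    exact ((integrable_const (Real.exp t - 1)).indicator ((hX i) hs)).add (integrable_const 1)
  have hmgf : ∀ i, mgf (Y i) P t
      = 1 + (Real.exp t - 1) * (P (X i ⁻¹' s)).toReal := by
    intro i
    rw [mgf, hYrepr i, integral_add (((integrable_const (Real.exp t - 1)).indicator
      ((hX i) hs))) (integrable_const 1)]
    rw [integral_indicator_const _ ((hX i) hs), integral_const]
    simp [measure_univ, smul_eq_mul]
    rw [measureReal_def]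
    ring
  have hmgf_le : ∀ i, mgf (Y i) P t ≤ Real.exp (q * (Real.exp t - 1)) := by
    intro i
    rw [hmgf i]
    have h1 : (1:ℝ) ≤ Real.exp t := Real.one_le_exp ht
    have h2 : (Real.exp t - 1) * (P (X i ⁻¹' s)).toReal ≤ (Real.exp t - 1) * q :=
      mul_le_mul_of_nonneg_left (hp i) (by linarith)
    calc 1 + (Real.exp t - 1) * (P (X i ⁻¹' s)).toReal ≤ 1 + q * (Real.exp t - 1) := by
          rw [mul_comm q]; linarith
    _ ≤ Real.exp (q * (Real.exp t - 1)) := by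
          linarith [Real.add_one_le_exp (q * (Real.exp t - 1))]
  have hset : {ω | (n : ℝ) * a ≤ (((Finset.range n).filter fun i => X i ω ∈ s).card : ℝ)}
      = {ω | (n : ℝ) * a ≤ (∑ i ∈ Finset.range n, Y i) ω} := by
    ext ω
    simp only [Set.mem_setOf_eq, Finset.sum_apply, hYdef, Finset.card_filter,
      Nat.cast_sum, Nat.cast_ite, Nat.cast_one, Nat.cast_zero]
  have hintsum : Integrable (fun ω => Real.exp (t * (∑ i ∈ Finset.range n, Y i) ω)) P :=
    hYindep.integrable_exp_mul_sum hYmeas (fun i _ => hYint i)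
  have hchern := measure_ge_le_exp_mul_mgf (μ := P) (X := ∑ i ∈ Finset.range n, Y i)
    ((n : ℝ) * a) ht hintsum
  rw [hset]
  refine hchern.trans ?_
  rw [hYindep.mgf_sum hYmeas (Finset.range n)]
  have hprod : ∏ i ∈ Finset.range n, mgf (Y i) P t
      ≤ (Real.exp (q * (Real.exp t - 1)))^n := by
    calc ∏ i ∈ Finset.range n, mgf (Y i) P t
        ≤ ∏ _i ∈ Finset.range n, Real.exp (q * (Real.exp t - 1)) :=
          Finset.prod_le_prod (fun i _ => mgf_nonneg) (fun i _ => hmgf_le i)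
    _ = (Real.exp (q * (Real.exp t - 1)))^n := by rw [Finset.prod_const, Finset.card_range]
  have hq' : q * (Real.exp t - 1) = a - q := by
    rw [het]; field_simp
  calc Real.exp (-t * ((n:ℝ) * a)) * ∏ i ∈ Finset.range n, mgf (Y i) P t
      ≤ Real.exp (-t * ((n:ℝ) * a)) * (Real.exp (q * (Real.exp t - 1)))^n :=
        mul_le_mul_of_nonneg_left hprod (Real.exp_nonneg _)
  _ = Real.exp (-(n : ℝ) * (a * t - (a - q))) := by
        rw [hq', ← Real.exp_nat_mul, ← Real.exp_add]
        ring_nf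
  _ = Real.exp (-(n : ℝ) * (a * Real.log (a / q) - (a - q))) := by rw [htdef]



/-- `R_n(V)`: the number of the first `n` observations lying in `V`. -/
noncomputable def countIn {Ω : Type*} (X : ℕ → Ω → ℝ) (ω : Ω) (n : ℕ) (V : Set ℝ) : ℕ :=
  ((Finset.range n).filter fun i => X i ω ∈ V).card

/-- The collection `𝒱` of subsets of `ℝ` that are unions of at most `M` intervals,
each of length at most `2c₀`. -/
def unionOfShortIntervals (M : ℕ) (c₀ : ℝ) : Set (Set ℝ) :=
  {V | ∃ W : Fin M → Set ℝ,
    (∀ j, (W j).OrdConnected ∧ ∀ y ∈ W j, ∀ z ∈ W j, |y - z| ≤ 2 * c₀) ∧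
    V = ⋃ j, W j}

set_option maxHeartbeats 2000000 in
/-- **Uniform covering bound.** If `x_1, …, x_n` are i.i.d. with density at most `u`
supported on a union of at most `M` intervals inside `[L_min, L_max]`, then
`Prob( sup_{V ∈ 𝒱} (1/n) R_n(V) − 3M·u·2c₀ > ε ) ≤ (L/(2c₀) + M)·exp(−2nε²/(9M²))`. -/
theorem prob_sup_countIn_unionOfShortIntervals_le
    (M : ℕ) (hM : 0 < M) (Lmin Lmax L : ℝ) (hL : L = Lmax - Lmin)
    (u : ℝ) (f₀ : ℝ → ℝ) (hf₀meas : Measurable f₀) (hf₀nn : ∀ x, 0 ≤ f₀ x)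
    (hf₀u : ∀ x, f₀ x ≤ u)
    (J₀ : Fin M → Set ℝ) (hJ₀ : ∀ j, (J₀ j).OrdConnected)
    (hsupp : Function.support f₀ ⊆ ⋃ j, J₀ j)
    (hsuppIcc : (⋃ j, J₀ j) ⊆ Set.Icc Lmin Lmax)
    {Ω : Type*} [MeasurableSpace Ω] (P : Measure Ω) [IsProbabilityMeasure P]
    (n : ℕ) (X : ℕ → Ω → ℝ) (hX : ∀ i, Measurable (X i))
    (hindep : iIndepFun X P)
    (hlaw : ∀ i, Measure.map (X i) P
      = volume.withDensity fun x => ENNReal.ofReal (f₀ x))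
    (c₀ ε : ℝ) (hc₀ : 0 < c₀) (hε : 0 < ε) :
    P {ω | ε < sSup {y : ℝ | ∃ V ∈ unionOfShortIntervals M c₀,
            y = (countIn X ω n V : ℝ) / n}
          - 3 * M * u * (2 * c₀)}
      ≤ ENNReal.ofReal ((L / (2 * c₀) + M) *
          Real.exp (-2 * n * ε ^ 2 / (9 * M ^ 2))) := by
  have hM' : (0:ℝ) < M := Nat.cast_pos.2 hM
  have hM1 : (1:ℝ) ≤ M := Nat.one_le_cast.2 hM
  have h2c : (0:ℝ) < 2 * c₀ := by linarith
  -- the density integrates to 1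
  have hone : (∫⁻ x, ENNReal.ofReal (f₀ x)) = 1 := by
    have h1 : (volume.withDensity fun x => ENNReal.ofReal (f₀ x)) Set.univ = 1 := by
      rw [← hlaw 0, Measure.map_apply (hX 0) MeasurableSet.univ]
      simp
    rwa [withDensity_apply _ MeasurableSet.univ, setLIntegral_univ] at h1
  obtain ⟨x₀, hx₀⟩ : ∃ x, f₀ x ≠ 0 := by
    by_contra h
    push_neg at h
    simp only [h, ENNReal.ofReal_zero, lintegral_zero] at hone
    exact zero_ne_one hone
  have hx₀I : x₀ ∈ Set.Icc Lmin Lmax := hsuppIcc (hsupp (Function.mem_support.2 hx₀))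
  have hu : 0 < u := lt_of_lt_of_le ((hf₀nn x₀).lt_of_ne (Ne.symm hx₀)) (hf₀u x₀)
  have hL0 : 0 ≤ L := by rw [hL]; linarith [hx₀I.1, hx₀I.2]
  -- scalar abbreviations
  obtain ⟨q, hqdef⟩ : ∃ q : ℝ, q = u * (2 * c₀) := ⟨_, rfl⟩
  have hq : 0 < q := by rw [hqdef]; positivity
  obtain ⟨sε, hsdef⟩ : ∃ s : ℝ, s = ε / (2 * M) := ⟨_, rfl⟩
  have hsε : 0 < sε := by rw [hsdef]; positivity
  obtain ⟨a, hadef⟩ : ∃ a : ℝ, a = 3/2 * q + sε := ⟨_, rfl⟩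
  have haq : q < a := by rw [hadef]; linarith
  -- the grid
  obtain ⟨N, hNdef⟩ : ∃ N : ℕ, N = ⌊L / (2 * c₀)⌋₊ + 1 := ⟨_, rfl⟩
  have hN0 : 0 < N := by omega
  have hNlt : L / (2 * c₀) < (N : ℝ) := by
    rw [hNdef]; push_cast; exact Nat.lt_floor_add_one _
  have hNle : (N : ℝ) ≤ L / (2 * c₀) + M := by
    rw [hNdef]; push_cast
    have := Nat.floor_le (show (0:ℝ) ≤ L / (2 * c₀) by positivity)
    linarith
  have hLltN : L < 2 * c₀ * N := by
    rw [div_lt_iff₀ h2c] at hNlt; linarith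
  -- generic cell membership for points of [Lmin, Lmax]
  have hgen : ∀ x ∈ Set.Icc Lmin Lmax,
      (x ∈ Set.Ico (Lmin + 2*c₀*(⌊(x - Lmin)/(2*c₀)⌋₊:ℝ))
        (Lmin + 2*c₀*((⌊(x - Lmin)/(2*c₀)⌋₊:ℝ)+1)))
      ∧ ⌊(x - Lmin)/(2*c₀)⌋₊ < N := by
    intro x hx
    obtain ⟨hx1, hx2⟩ := hx
    have h0 : 0 ≤ (x - Lmin)/(2*c₀) := div_nonneg (by linarith) h2c.le
    refine ⟨⟨?_, ?_⟩, ?_⟩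
    · have h1 := Nat.floor_le h0
      rw [le_div_iff₀ h2c] at h1
      linarith
    · have h1 := Nat.lt_floor_add_one ((x - Lmin)/(2*c₀))
      rw [div_lt_iff₀ h2c] at h1
      linarith
    · have h1 : ⌊(x - Lmin)/(2*c₀)⌋₊ ≤ ⌊L/(2*c₀)⌋₊ := by
        apply Nat.floor_mono
        rw [div_le_div_iff₀ h2c h2c]
        nlinarith [h2c]
      omega
  -- cell probabilities
  have hcellprob : ∀ (i : ℕ) (k : ℕ),
      (P (X i ⁻¹' Set.Ico (Lmin + 2*c₀*(k:ℝ)) (Lmin + 2*c₀*((k:ℝ)+1)))).toReal ≤ q := by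
    intro i k
    have h1 : P (X i ⁻¹' Set.Ico (Lmin + 2*c₀*(k:ℝ)) (Lmin + 2*c₀*((k:ℝ)+1)))
        ≤ ENNReal.ofReal q := by
      rw [← Measure.map_apply (hX i) measurableSet_Ico, hlaw i,
        withDensity_apply _ measurableSet_Ico]
      calc (∫⁻ x in Set.Ico (Lmin + 2*c₀*(k:ℝ)) (Lmin + 2*c₀*((k:ℝ)+1)),
              ENNReal.ofReal (f₀ x))
          ≤ ∫⁻ _x in Set.Ico (Lmin + 2*c₀*(k:ℝ)) (Lmin + 2*c₀*((k:ℝ)+1)),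
              ENNReal.ofReal u :=
            lintegral_mono (fun x => ENNReal.ofReal_le_ofReal (hf₀u x))
      _ = ENNReal.ofReal u * volume (Set.Ico (Lmin + 2*c₀*(k:ℝ)) (Lmin + 2*c₀*((k:ℝ)+1))) := by
            rw [setLIntegral_const]
      _ = ENNReal.ofReal u * ENNReal.ofReal (2*c₀) := by
            rw [Real.volume_Ico]
            congr 1
            ring
      _ = ENNReal.ofReal q := by
            rw [← ENNReal.ofReal_mul hu.le, hqdef]
    calc (P (X i ⁻¹' Set.Ico (Lmin + 2*c₀*(k:ℝ)) (Lmin + 2*c₀*((k:ℝ)+1)))).toReal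
        ≤ (ENNReal.ofReal q).toReal := ENNReal.toReal_mono ENNReal.ofReal_ne_top h1
    _ = q := ENNReal.toReal_ofReal hq.le
  -- the bad-cell events
  obtain ⟨A, hA⟩ : ∃ A : ℕ → Set Ω, A = fun k : ℕ =>
      {ω | (n : ℝ) * a ≤ (((Finset.range n).filter fun i =>
        X i ω ∈ Set.Ico (Lmin + 2*c₀*(k:ℝ)) (Lmin + 2*c₀*((k:ℝ)+1))).card : ℝ)} := ⟨_, rfl⟩
  -- the a.s. event that all points are in [Lmin, Lmax]
  obtain ⟨G, hG⟩ : ∃ G : Set Ω, G = {ω | ∀ i < n, X i ω ∈ Set.Icc Lmin Lmax} := ⟨_, rfl⟩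
  have hGnull : P Gᶜ = 0 := by
    have hnull : ∀ i : ℕ, P {ω | X i ω ∉ Set.Icc Lmin Lmax} = 0 := by
      intro i
      have hpre : {ω | X i ω ∉ Set.Icc Lmin Lmax} = X i ⁻¹' (Set.Icc Lmin Lmax)ᶜ := rfl
      rw [hpre, ← Measure.map_apply (hX i) measurableSet_Icc.compl, hlaw i,
        withDensity_apply _ measurableSet_Icc.compl]
      have hzero : (∫⁻ x in (Set.Icc Lmin Lmax)ᶜ, ENNReal.ofReal (f₀ x))
          = ∫⁻ _x in (Set.Icc Lmin Lmax)ᶜ, (0 : ENNReal) := by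
        apply setLIntegral_congr_fun measurableSet_Icc.compl
        intro x hx
        have hz : f₀ x = 0 := by
          by_contra h
          exact hx (hsuppIcc (hsupp (Function.mem_support.2 h)))
        simp [hz]
      rw [hzero]
      simp
    have hsub : Gᶜ ⊆ ⋃ i : ℕ, {ω | X i ω ∉ Set.Icc Lmin Lmax} := by
      intro ω hω
      rw [hG] at hω
      simp only [Set.mem_compl_iff, Set.mem_setOf_eq, not_forall] at hω
      obtain ⟨i, _, hx⟩ := hω
      exact Set.mem_iUnion.2 ⟨i, hx⟩
    exact measure_mono_null hsub (measure_iUnion_null (fun i => hnull i))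
  -- the bound on each cell event
  have hcell : ∀ k ∈ Finset.range N,
      P (A k) ≤ ENNReal.ofReal (Real.exp (-2 * n * ε ^ 2 / (9 * M ^ 2))) := by
    intro k _
    rcases Nat.eq_zero_or_pos n with hn | hn
    · subst hn
      have hAu : A k = Set.univ := by
        rw [hA]
        ext ω
        simp
      rw [hAu, measure_univ,
        show (-2 * ((0:ℕ):ℝ) * ε ^ 2 / (9 * M ^ 2)) = 0 by push_cast; ring,
        Real.exp_zero, ENNReal.ofReal_one]
    · by_cases ha1 : a ≤ 1
      · have hch := chernoff_count P n X hX hindep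
          (Set.Ico (Lmin + 2*c₀*(k:ℝ)) (Lmin + 2*c₀*((k:ℝ)+1))) measurableSet_Ico
          q a hq haq (fun i => hcellprob i k)
        have hexp : 8/9 * sε^2 ≤ a * Real.log (a / q) - (a - q) := by
          have := exponent_ineq hq hsε (by rw [← hadef]; exact ha1)
          rwa [← hadef] at this
        have h2 : Real.exp (-(n:ℝ) * (a * Real.log (a/q) - (a - q)))
            ≤ Real.exp (-2 * n * ε ^ 2 / (9 * M ^ 2)) := by
          apply Real.exp_le_exp.2
          have hn0 : (0:ℝ) ≤ n := Nat.cast_nonneg n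
          have hconst : -2 * (n:ℝ) * ε ^ 2 / (9 * M ^ 2) = -(n:ℝ) * (8/9 * sε^2) := by
            rw [hsdef]
            field_simp
            ring
          rw [hconst]
          nlinarith [mul_le_mul_of_nonneg_left hexp hn0]
        refine (ENNReal.le_ofReal_iff_toReal_le (measure_ne_top P _) (Real.exp_nonneg _)).2
          (le_trans (ENNReal.toReal_mono (measure_ne_top P _) (measure_mono ?_))
            (le_trans hch h2))
        rw [hA]
        intro ω hω
        simp only [Set.mem_setOf_eq] at hω ⊢
        rw [Finset.filter_congr_decidable (Finset.range n)
          (fun i => X i ω ∈ Set.Ico (Lmin + 2*c₀*(k:ℝ)) (Lmin + 2*c₀*((k:ℝ)+1)))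
          (fun i => Classical.propDecidable _)]
        exact hω
      · have hAe : A k = ∅ := by
          rw [hA]
          ext ω
          simp only [Set.mem_setOf_eq, Set.mem_empty_iff_false, iff_false, not_le]
          have hcard : (((Finset.range n).filter fun i =>
              X i ω ∈ Set.Ico (Lmin + 2*c₀*(k:ℝ)) (Lmin + 2*c₀*((k:ℝ)+1))).card : ℝ) ≤ n := by
            exact_mod_cast Nat.cast_le.2 (le_trans (Finset.card_filter_le _ _)
              (le_of_eq (Finset.card_range n)))
          have hn' : (1:ℝ) ≤ n := Nat.one_le_cast.2 hn
          push_neg at ha1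
          nlinarith
        rw [hAe]
        simp
  -- the inclusion
  have hincl : {ω | ε < sSup {y : ℝ | ∃ V ∈ unionOfShortIntervals M c₀,
            y = (countIn X ω n V : ℝ) / n} - 3 * M * u * (2 * c₀)}
      ⊆ (⋃ k ∈ Finset.range N, A k) ∪ Gᶜ := by
    intro ω hω
    rw [Set.mem_setOf_eq] at hω
    by_cases hGω : ω ∈ G
    swap
    · exact Or.inr hGω
    left
    rw [hG, Set.mem_setOf_eq] at hGω
    have h3M : 3 * (M:ℝ) * u * (2 * c₀) = 3 * M * q := by rw [hqdef]; ring
    rcases Nat.eq_zero_or_pos n with hn | hn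
    · exfalso
      subst hn
      have hsup0 : sSup {y : ℝ | ∃ V ∈ unionOfShortIntervals M c₀,
          y = (countIn X ω 0 V : ℝ) / (0:ℕ)} ≤ 0 := by
        apply Real.sSup_le _ le_rfl
        rintro y ⟨V, hV, rfl⟩
        simp
      have : 0 < 3 * (M:ℝ) * u * (2 * c₀) := by positivity
      linarith
    have hnR : (0:ℝ) < n := Nat.cast_pos.2 hn
    -- the max cell count
    obtain ⟨msup, hmsup⟩ : ∃ m : ℕ, m = (Finset.range N).sup (fun k =>
        ((Finset.range n).filter fun i =>
          X i ω ∈ Set.Ico (Lmin + 2*c₀*(k:ℝ)) (Lmin + 2*c₀*((k:ℝ)+1))).card) := ⟨_, rfl⟩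
    -- cells beyond N are empty
    have hcnt0 : ∀ k : ℕ, N ≤ k → ((Finset.range n).filter fun i =>
        X i ω ∈ Set.Ico (Lmin + 2*c₀*(k:ℝ)) (Lmin + 2*c₀*((k:ℝ)+1))).card = 0 := by
      intro k hk
      rw [Finset.card_eq_zero, Finset.filter_eq_empty_iff]
      intro i hi
      have hIcc := hGω i (Finset.mem_range.1 hi)
      intro hmem
      have h1 : Lmin + 2*c₀*(k:ℝ) ≤ X i ω := hmem.1
      have h2 : (N:ℝ) ≤ k := Nat.cast_le.2 hk
      have h3 : X i ω ≤ Lmax := hIcc.2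
      nlinarith [h2c]
    -- each short interval catches at most 2 * msup points
    have hFj : ∀ W : Set ℝ, (∀ y ∈ W, ∀ z ∈ W, |y - z| ≤ 2 * c₀) →
        ((Finset.range n).filter fun i => X i ω ∈ W).card ≤ 2 * msup := by
      intro W hW
      rcases Finset.eq_empty_or_nonempty ((Finset.range n).filter fun i => X i ω ∈ W) with hFe | hFne
      · rw [hFe]; simp
      · have himg := hFne.image (fun i => ⌊(X i ω - Lmin)/(2*c₀)⌋₊)
        obtain ⟨i₀, hi₀F, hi₀⟩ : ∃ i₀ ∈ ((Finset.range n).filter fun i => X i ω ∈ W),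
            ⌊(X i₀ ω - Lmin)/(2*c₀)⌋₊ = (((Finset.range n).filter fun i => X i ω ∈ W).image
              (fun i => ⌊(X i ω - Lmin)/(2*c₀)⌋₊)).min' himg := by
          have h := Finset.min'_mem _ himg
          rw [Finset.mem_image] at h
          obtain ⟨i₀, h1, h2⟩ := h
          exact ⟨i₀, h1, h2⟩
        obtain ⟨m, hmdef⟩ : ∃ m : ℕ, m = (((Finset.range n).filter fun i => X i ω ∈ W).image
            (fun i => ⌊(X i ω - Lmin)/(2*c₀)⌋₊)).min' himg := ⟨_, rfl⟩
        rw [← hmdef] at hi₀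
        have hmemW : ∀ i ∈ ((Finset.range n).filter fun i => X i ω ∈ W), X i ω ∈ W :=
          fun i hi => (Finset.mem_filter.1 hi).2
        have hmemI : ∀ i ∈ ((Finset.range n).filter fun i => X i ω ∈ W),
            X i ω ∈ Set.Icc Lmin Lmax :=
          fun i hi => hGω i (Finset.mem_range.1 (Finset.mem_filter.1 hi).1)
        have hsubF : ((Finset.range n).filter fun i => X i ω ∈ W)
            ⊆ ((Finset.range n).filter fun i =>
                X i ω ∈ Set.Ico (Lmin + 2*c₀*(m:ℝ)) (Lmin + 2*c₀*((m:ℝ)+1)))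
              ∪ ((Finset.range n).filter fun i =>
                X i ω ∈ Set.Ico (Lmin + 2*c₀*((m+1:ℕ):ℝ)) (Lmin + 2*c₀*(((m+1:ℕ):ℝ)+1))) := by
          intro i hi
          have h1 : m ≤ ⌊(X i ω - Lmin)/(2*c₀)⌋₊ := by
            rw [hmdef]
            exact Finset.min'_le _ _ (Finset.mem_image_of_mem _ hi)
          have h2 : ⌊(X i ω - Lmin)/(2*c₀)⌋₊ ≤ m + 1 := by
            have hab := hW _ (hmemW i hi) _ (hmemW i₀ hi₀F)
            have habs := abs_le.1 hab
            have hle2 : (X i ω - Lmin)/(2*c₀) ≤ (X i₀ ω - Lmin)/(2*c₀) + 1 := by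
              rw [div_add' _ _ _ (ne_of_gt h2c), div_le_div_iff₀ h2c h2c]
              nlinarith [habs.1, h2c]
            have h0 : 0 ≤ (X i₀ ω - Lmin)/(2*c₀) :=
              div_nonneg (by linarith [(hmemI i₀ hi₀F).1]) h2c.le
            calc ⌊(X i ω - Lmin)/(2*c₀)⌋₊ ≤ ⌊(X i₀ ω - Lmin)/(2*c₀) + 1⌋₊ :=
                  Nat.floor_mono hle2
            _ = ⌊(X i₀ ω - Lmin)/(2*c₀)⌋₊ + 1 := Nat.floor_add_one h0
            _ = m + 1 := by rw [hi₀]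
          have hcellmem := (hgen (X i ω) (hmemI i hi)).1
          rw [Finset.mem_union]
          rcases eq_or_lt_of_le h1 with he | hlt
          · left
            refine Finset.mem_filter.2 ⟨(Finset.mem_filter.1 hi).1, ?_⟩
            rw [he]
            exact hcellmem
          · right
            have he : ⌊(X i ω - Lmin)/(2*c₀)⌋₊ = m + 1 := by omega
            refine Finset.mem_filter.2 ⟨(Finset.mem_filter.1 hi).1, ?_⟩
            rw [show ((m+1:ℕ):ℝ) = (⌊(X i ω - Lmin)/(2*c₀)⌋₊ : ℝ) by rw [he]]
            exact hcellmem
        have hmN : m < N := by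
          rw [← hi₀]
          exact (hgen (X i₀ ω) (hmemI i₀ hi₀F)).2
        have hc1 : ((Finset.range n).filter fun i =>
            X i ω ∈ Set.Ico (Lmin + 2*c₀*(m:ℝ)) (Lmin + 2*c₀*((m:ℝ)+1))).card ≤ msup := by
          rw [hmsup]
          exact Finset.le_sup (f := fun k : ℕ => ((Finset.range n).filter fun i =>
            X i ω ∈ Set.Ico (Lmin + 2*c₀*(k:ℝ)) (Lmin + 2*c₀*((k:ℝ)+1))).card)
            (Finset.mem_range.2 hmN)
        have hc2 : ((Finset.range n).filter fun i =>
            X i ω ∈ Set.Ico (Lmin + 2*c₀*((m+1:ℕ):ℝ)) (Lmin + 2*c₀*(((m+1:ℕ):ℝ)+1))).card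
              ≤ msup := by
          by_cases hmN2 : m + 1 < N
          · rw [hmsup]
            exact Finset.le_sup (f := fun k : ℕ => ((Finset.range n).filter fun i =>
              X i ω ∈ Set.Ico (Lmin + 2*c₀*(k:ℝ)) (Lmin + 2*c₀*((k:ℝ)+1))).card)
              (Finset.mem_range.2 hmN2)
          · rw [hcnt0 (m+1) (by omega)]
            exact Nat.zero_le _
        calc ((Finset.range n).filter fun i => X i ω ∈ W).card
            ≤ _ := Finset.card_le_card hsubF
        _ ≤ _ := Finset.card_union_le _ _
        _ ≤ 2 * msup := by omega
    -- count of any V is at most 2 * M * msup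
    have hcount : ∀ V ∈ unionOfShortIntervals M c₀, countIn X ω n V ≤ 2 * M * msup := by
      rintro V ⟨W, hWp, rfl⟩
      have hsubV : ((Finset.range n).filter fun i => X i ω ∈ ⋃ j, W j)
          ⊆ Finset.univ.biUnion (fun j : Fin M =>
              (Finset.range n).filter fun i => X i ω ∈ W j) := by
        intro i hi
        rw [Finset.mem_filter] at hi
        obtain ⟨j, hj⟩ := Set.mem_iUnion.1 hi.2
        exact Finset.mem_biUnion.2 ⟨j, Finset.mem_univ _, Finset.mem_filter.2 ⟨hi.1, hj⟩⟩
      calc countIn X ω n (⋃ j, W j)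
          ≤ (Finset.univ.biUnion (fun j : Fin M =>
              (Finset.range n).filter fun i => X i ω ∈ W j)).card :=
            Finset.card_le_card hsubV
      _ ≤ ∑ j : Fin M, ((Finset.range n).filter fun i => X i ω ∈ W j).card :=
            Finset.card_biUnion_le
      _ ≤ ∑ _j : Fin M, 2 * msup :=
            Finset.sum_le_sum (fun j _ => hFj (W j) (hWp j).2)
      _ = M * (2 * msup) := by
            rw [Finset.sum_const, Finset.card_univ, Fintype.card_fin, smul_eq_mul]
      _ = 2 * M * msup := by ring
    -- bound on the sup
    have hsup_le : sSup {y : ℝ | ∃ V ∈ unionOfShortIntervals M c₀,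
        y = (countIn X ω n V : ℝ) / n} ≤ 2 * M * msup / n := by
      apply Real.sSup_le _ (by positivity)
      rintro y ⟨V, hV, rfl⟩
      rw [div_le_div_iff₀ hnR hnR]
      have := hcount V hV
      have hcast : (countIn X ω n V : ℝ) ≤ 2 * M * msup := by exact_mod_cast this
      nlinarith
    have hlt : ε + 3 * (M:ℝ) * q < 2 * M * msup / n := by
      rw [h3M] at hω
      linarith
    rw [lt_div_iff₀ hnR] at hlt
    have h2Ma : 2 * (M:ℝ) * a = 3 * M * q + ε := by
      rw [hadef, hsdef]
      field_simp
    have hna : (n:ℝ) * a < msup := by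
      have e1 : 2 * (M:ℝ) * ((n:ℝ) * a) = (ε + 3 * M * q) * n := by
        rw [show 2 * (M:ℝ) * ((n:ℝ) * a) = (2 * M * a) * n by ring, h2Ma]
        ring
      have e2 : 2 * (M:ℝ) * ((n:ℝ) * a) < 2 * M * (msup : ℝ) := by
        rw [e1]
        calc (ε + 3 * (M:ℝ) * q) * n < 2 * M * msup := hlt
        _ = 2 * M * (msup:ℝ) := rfl
      exact lt_of_mul_lt_mul_left e2 (by positivity)
    obtain ⟨k, hk, hke⟩ := Finset.exists_mem_eq_sup (Finset.range N)
      ⟨0, Finset.mem_range.2 hN0⟩ (fun k => ((Finset.range n).filter fun i =>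
        X i ω ∈ Set.Ico (Lmin + 2*c₀*(k:ℝ)) (Lmin + 2*c₀*((k:ℝ)+1))).card)
    refine Set.mem_iUnion₂.2 ⟨k, hk, ?_⟩
    rw [hA]
    show (n : ℝ) * a ≤ _
    rw [← hke, ← hmsup]
    exact hna.le
  -- putting it together
  calc P {ω | ε < sSup {y : ℝ | ∃ V ∈ unionOfShortIntervals M c₀,
            y = (countIn X ω n V : ℝ) / n} - 3 * M * u * (2 * c₀)}
      ≤ P ((⋃ k ∈ Finset.range N, A k) ∪ Gᶜ) := measure_mono hincl
  _ ≤ P (⋃ k ∈ Finset.range N, A k) + P Gᶜ := measure_union_le _ _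
  _ = P (⋃ k ∈ Finset.range N, A k) := by rw [hGnull, add_zero]
  _ ≤ ∑ k ∈ Finset.range N, P (A k) := measure_biUnion_finset_le _ _
  _ ≤ ∑ _k ∈ Finset.range N, ENNReal.ofReal (Real.exp (-2 * n * ε ^ 2 / (9 * M ^ 2))) :=
        Finset.sum_le_sum hcell
  _ = (N : ENNReal) * ENNReal.ofReal (Real.exp (-2 * n * ε ^ 2 / (9 * M ^ 2))) := by
        rw [Finset.sum_const, Finset.card_range, nsmul_eq_mul]
  _ = ENNReal.ofReal ((N : ℝ) * Real.exp (-2 * n * ε ^ 2 / (9 * M ^ 2))) := by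
        rw [ENNReal.ofReal_mul (Nat.cast_nonneg N), ENNReal.ofReal_natCast]
  _ ≤ ENNReal.ofReal ((L / (2 * c₀) + M) * Real.exp (-2 * n * ε ^ 2 / (9 * M ^ 2))) :=
        ENNReal.ofReal_le_ofReal (mul_le_mul_of_nonneg_right hNle (Real.exp_nonneg _))
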